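/- Let k be a commutative field and let H be a division ring of finite dimension over its center k. Assume PIGCP_k holds: for every n and every homogeneous polynomial F ∈ k[x₁, …, xₙ] having only the trivial zero on k, and for every finite group G, there exists a finite Galois extension L/k(t) with Galois group isomorphic to G such that F has only the trivial zero on L. Then for every finite group G there exist a division ring Ω and an injective ring homomorphism f : H ⊗_k k(t) → Ω such that the group Γ of ring automorphisms of Ω fixing the image of f pointwise is isomorphic to G, and the set of elements of Ω fixed by every element of Γ is exactly the image of f. -/

import Mathlib

open TensorProduct


/-- The group of ring automorphisms of `Ω` fixing the image of `f : A →+* Ω` pointwise. -/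
def ringFixingGroup {A Ω : Type*} [NonAssocSemiring A] [NonAssocSemiring Ω]
    (f : A →+* Ω) : Subgroup (RingAut Ω) where
  carrier := {g | ∀ a, g (f a) = f a}
  one_mem' := fun _ => rfl
  mul_mem' := by
    intro g h hg hh a
    show g (h (f a)) = f a
    rw [hh, hg]
  inv_mem' := by
    intro g hg a
    apply g.injective
    show g (g.symm (f a)) = g (f a)
    rw [RingEquiv.apply_symm_apply, hg]

/-- `PIGCP k` (inverse Galois problem with polynomial constraint over `k`): for every
homogeneous polynomial `F` with coefficients in `k` having only the trivial zero on `k` and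
every finite group `G`, there is a finite Galois extension `L/k(t)` of group `G` such that
`F` has only the trivial zero on `L`. -/
def PIGCP (k : Type) [Field k] : Prop :=
  ∀ (n d : ℕ) (F : MvPolynomial (Fin n) k), F.IsHomogeneous d →
    (∀ z : Fin n → k, MvPolynomial.eval z F = 0 → z = 0) →
    ∀ (G : Type) [Group G] [Finite G],
      ∃ (L : Type) (fL : Field L) (aL : Algebra k L) (aRL : Algebra (RatFunc k) L),
        letI := fL; letI := aL; letI := aRL;
        IsScalarTower k (RatFunc k) L ∧
        FiniteDimensional (RatFunc k) L ∧ IsGalois (RatFunc k) L ∧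
        Nonempty (G ≃* (L ≃ₐ[RatFunc k] L)) ∧
        ∀ z : Fin n → L, MvPolynomial.aeval z F = 0 → z = 0

set_option linter.unusedSectionVars false

open MvPolynomial

section NormPoly

variable {k : Type*} [Field k] {H : Type*} [Ring H] [Algebra k H]
variable {m : ℕ} (b : Module.Basis (Fin m) k H)

/-- generic left-multiplication matrix -/
noncomputable def normMat : Matrix (Fin m) (Fin m) (MvPolynomial (Fin m) k) :=
  Matrix.of fun i j => ∑ l, X l * C (b.repr (b l * b j) i)

noncomputable def normPoly : MvPolynomial (Fin m) k := (normMat b).det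

lemma normPoly_isHomogeneous : (normPoly b).IsHomogeneous m := by
  rw [normPoly, Matrix.det_apply]
  apply MvPolynomial.IsHomogeneous.sum
  intro σ _
  have hent : ∀ i ∈ Finset.univ, (normMat b (σ i) i).IsHomogeneous ((fun _ => 1) i) := by
    intro i _
    show ((∑ l, X l * C (b.repr (b l * b i) (σ i))) : MvPolynomial (Fin m) k).IsHomogeneous 1
    apply MvPolynomial.IsHomogeneous.sum
    intro l _
    simpa using (MvPolynomial.isHomogeneous_X k l).mul (MvPolynomial.isHomogeneous_C _ _)
  have hprod : (∏ i, normMat b (σ i) i).IsHomogeneous m := by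
    simpa using MvPolynomial.IsHomogeneous.prod Finset.univ
      (fun i => normMat b (σ i) i) (fun _ => 1) hent
  rcases Int.units_eq_one_or (Equiv.Perm.sign σ) with h | h <;> rw [h]
  · simpa using hprod
  · have hneg : ((-1 : ℤˣ) • (∏ i, normMat b (σ i) i)) = -(∏ i, normMat b (σ i) i) := by
      simp [Units.smul_def]
    rw [hneg]
    exact (homogeneousSubmodule (Fin m) k m).neg_mem hprod

variable (A : Type*) [CommRing A] [Algebra k A]

lemma aeval_normPoly (z : Fin m → A) :
    aeval z (normPoly b) =
      (Algebra.leftMulMatrix (b.baseChange A) (∑ l, z l • (b.baseChange A) l)).det := by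
  have hdet : (aeval z) (normMat b).det = ((normMat b).map (aeval z)).det := by
    simpa using RingHom.map_det ((aeval z : MvPolynomial (Fin m) k →ₐ[k] A) :
      MvPolynomial (Fin m) k →+* A) (normMat b)
  rw [normPoly, hdet]
  congr 1
  ext i j
  have h1 : (Algebra.leftMulMatrix (b.baseChange A) (∑ l, z l • (b.baseChange A) l)) i j
      = ∑ l, z l * algebraMap k A (b.repr (b l * b j) i) := by
    rw [Algebra.leftMulMatrix_eq_repr_mul, Finset.sum_mul, map_sum, Finsupp.coe_finset_sum,
      Finset.sum_apply]
    refine Finset.sum_congr rfl fun l _ => ?_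
    rw [smul_mul_assoc, map_smul]
    have : (b.baseChange A) l * (b.baseChange A) j = (1 : A) ⊗ₜ[k] (b l * b j) := by
      rw [Module.Basis.baseChange_apply, Module.Basis.baseChange_apply, Algebra.TensorProduct.tmul_mul_tmul,
        one_mul]
    rw [this]
    simp only [Finsupp.smul_apply, Module.Basis.baseChange_repr_tmul, smul_eq_mul]
    rw [Algebra.algebraMap_eq_smul_one]
  rw [Matrix.map_apply, h1, normMat]
  simp only [Matrix.of_apply, map_sum, map_mul, aeval_X, MvPolynomial.aeval_C]

end NormPoly

section UnitDet

variable {k : Type*} [Field k] {H : Type*} [Ring H] [Algebra k H]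
variable {m : ℕ} (b : Module.Basis (Fin m) k H)
variable {A : Type*} [Field A] [Algebra k A]

lemma isUnit_iff_det_ne_zero (x : A ⊗[k] H) :
    IsUnit x ↔ (Algebra.leftMulMatrix (b.baseChange A) x).det ≠ 0 := by
  have h1 : IsUnit x ↔ IsUnit (Algebra.lmul A (A ⊗[k] H) x) := (Algebra.lmul_isUnit_iff).symm
  have h2 : LinearMap.toMatrixAlgEquiv (b.baseChange A) (Algebra.lmul A (A ⊗[k] H) x)
      = Algebra.leftMulMatrix (b.baseChange A) x := by
    ext i j
    rw [LinearMap.toMatrixAlgEquiv_apply, Algebra.leftMulMatrix_eq_repr_mul]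
    rfl
  have h3 : IsUnit (Algebra.lmul A (A ⊗[k] H) x)
      ↔ IsUnit (Algebra.leftMulMatrix (b.baseChange A) x) := by
    constructor
    · intro h
      have := h.map (LinearMap.toMatrixAlgEquiv (b.baseChange A) :
        Module.End A (A ⊗[k] H) →* Matrix (Fin m) (Fin m) A)
      rwa [MonoidHom.coe_coe, h2] at this
    · intro h
      have := h.map ((LinearMap.toMatrixAlgEquiv (b.baseChange A)).symm :
        Matrix (Fin m) (Fin m) A →* Module.End A (A ⊗[k] H))
      rwa [MonoidHom.coe_coe, ← h2, AlgEquiv.symm_apply_apply] at this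
  rw [h1, h3, Matrix.isUnit_iff_isUnit_det, isUnit_iff_ne_zero]

end UnitDet

section TrivialZero

variable {k : Type*} [Field k] {H : Type*} [DivisionRing H] [Algebra k H]
variable {m : ℕ} (b : Module.Basis (Fin m) k H)

lemma normPoly_trivial_zero_on_k : ∀ z : Fin m → k, eval z (normPoly b) = 0 → z = 0 := by
  intro z hz
  by_contra hzne
  have heval : aeval z (normPoly b) = eval z (normPoly b) := by
    rw [aeval_def, Algebra.algebraMap_self]
    rfl
  set x : k ⊗[k] H := ∑ l, z l • (b.baseChange k) l with hx
  have hdet : (Algebra.leftMulMatrix (b.baseChange k) x).det = 0 := by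
    rw [← aeval_normPoly, heval, hz]
  have hlid : (Algebra.TensorProduct.lid k H) x = ∑ l, z l • b l := by
    rw [hx, map_sum]
    refine Finset.sum_congr rfl fun l _ => ?_
    rw [map_smul, Module.Basis.baseChange_apply]
    simp
  have hxne : (Algebra.TensorProduct.lid k H) x ≠ 0 := by
    rw [hlid]
    intro h
    apply hzne
    funext j
    have h2 := congrArg (fun v => b.repr v j) h
    simpa [Finsupp.single_apply] using h2
  have hunit : IsUnit x := by
    have : IsUnit ((Algebra.TensorProduct.lid k H) x) := isUnit_iff_ne_zero.mpr hxne
    have := this.map ((Algebra.TensorProduct.lid k H).symm :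
      H →* k ⊗[k] H)
    rwa [MonoidHom.coe_coe, AlgEquiv.symm_apply_apply] at this
  exact ((isUnit_iff_det_ne_zero b x).mp hunit) hdet

end TrivialZero

section Center

variable {k : Type*} [Field k] {H : Type*} [Ring H] [Nontrivial H] [Algebra k H]
variable {L : Type*} [Field L] [Algebra k L]

open Classical in
/-- coordinates of `L ⊗ H` along a `k`-basis of `L`, with values in `H` -/
noncomputable def eAux : (L ⊗[k] H) ≃ₗ[k] ((Module.Basis.ofVectorSpaceIndex k L) →₀ H) :=
  (TensorProduct.congr (Module.Basis.ofVectorSpace k L).repr (LinearEquiv.refl k H)).trans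
    (TensorProduct.finsuppScalarLeft k H _)

lemma eAux_tmul (c : L) (h : H) (i) :
    eAux (c ⊗ₜ[k] h) i = (Module.Basis.ofVectorSpace k L).repr c i • h := by
  simp [eAux, TensorProduct.finsuppScalarLeft_apply_tmul_apply]

lemma eAux_mul_right (x : L ⊗[k] H) (h' : H) (i) :
    eAux (x * ((1:L) ⊗ₜ[k] h')) i = eAux x i * h' := by
  induction x using TensorProduct.induction_on with
  | zero => simp
  | tmul c h =>
      rw [Algebra.TensorProduct.tmul_mul_tmul, mul_one, eAux_tmul, eAux_tmul, smul_mul_assoc]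
  | add u v hu hv => rw [add_mul, map_add, map_add, Finsupp.add_apply, Finsupp.add_apply,
      hu, hv, add_mul]

lemma eAux_mul_left (x : L ⊗[k] H) (h' : H) (i) :
    eAux (((1:L) ⊗ₜ[k] h') * x) i = h' * eAux x i := by
  induction x using TensorProduct.induction_on with
  | zero => simp
  | tmul c h =>
      rw [Algebra.TensorProduct.tmul_mul_tmul, one_mul, eAux_tmul, eAux_tmul, mul_smul_comm]
  | add u v hu hv => rw [mul_add, map_add, map_add, Finsupp.add_apply, Finsupp.add_apply,
      hu, hv, mul_add]

lemma smul_one_inj {r r' : k} (h : r • (1:H) = r' • (1:H)) : r = r' := by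
  have h2 : algebraMap k H r = algebraMap k H r' := by
    rw [Algebra.algebraMap_eq_smul_one, Algebra.algebraMap_eq_smul_one]; exact h
  exact (algebraMap k H).injective h2

lemma tmul_one_injective : Function.Injective (fun c : L => c ⊗ₜ[k] (1:H)) := by
  intro c c' h
  apply (Module.Basis.ofVectorSpace k L).repr.injective
  ext i
  have h2 : eAux (c ⊗ₜ[k] (1:H)) i = eAux (c' ⊗ₜ[k] (1:H)) i := by
    simp only at h; rw [h]
  rw [eAux_tmul, eAux_tmul] at h2
  exact smul_one_inj h2

lemma exists_tmul_one_of_commutes (hcenter : Subalgebra.center k H = ⊥)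
    (x : L ⊗[k] H) (hx : ∀ h : H, x * ((1:L) ⊗ₜ[k] h) = ((1:L) ⊗ₜ[k] h) * x) :
    ∃ c : L, x = c ⊗ₜ[k] (1:H) := by
  have hcen : ∀ i, ∃ a : k, algebraMap k H a = eAux x i := by
    intro i
    have hc : eAux x i ∈ Subalgebra.center k H := by
      rw [Subalgebra.mem_center_iff]
      intro h
      have h3 := congrArg (fun v => eAux v i) (hx h)
      simp only [eAux_mul_right, eAux_mul_left] at h3
      rw [h3]
    rw [hcenter] at hc
    exact Algebra.mem_bot.mp hc
  choose a ha using hcen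
  have hiff : ∀ i, i ∈ (eAux x).support ↔ a i ≠ 0 := by
    intro i
    rw [Finsupp.mem_support_iff, ← ha i]
    constructor
    · intro h hz
      apply h; rw [hz, map_zero]
    · intro h hz
      exact h (((algebraMap k H).injective) (by rw [hz, map_zero]))
  set af : (Module.Basis.ofVectorSpaceIndex k L) →₀ k := ⟨(eAux x).support, a, hiff⟩ with haf
  refine ⟨(Module.Basis.ofVectorSpace k L).repr.symm af, ?_⟩
  apply eAux.injective
  ext i
  rw [eAux_tmul, LinearEquiv.apply_symm_apply]
  show eAux x i = af i • (1:H)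
  rw [← ha i, Algebra.algebraMap_eq_smul_one]
  rfl

end Center

section Aux

variable (k F L H : Type*) [Field k] [Field F] [Field L]
  [Algebra k F] [Algebra k L] [Algebra F L] [IsScalarTower k F L]
  [DivisionRing H] [Algebra k H] [FiniteDimensional k H]
  [FiniteDimensional F L] [IsGalois F L]

set_option maxHeartbeats 1000000 in
theorem aux_main (hcenter : Subalgebra.center k H = ⊥) :
    ∃ f : (H ⊗[k] F) →+* (L ⊗[k] H),
      Function.Injective f ∧
      Nonempty ((L ≃ₐ[F] L) ≃* ringFixingGroup f) ∧
      ∀ x : L ⊗[k] H, (∀ g ∈ ringFixingGroup f, g x = x) → x ∈ Set.range f := by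
  classical
  set ιF : F →ₐ[k] L := IsScalarTower.toAlgHom k F L with hιF
  set fAlg : (H ⊗[k] F) →ₐ[k] (L ⊗[k] H) :=
    ((Algebra.TensorProduct.comm k H L).toAlgHom.comp
      (Algebra.TensorProduct.map (AlgHom.id k H) ιF)) with hfAlg
  set f : (H ⊗[k] F) →+* (L ⊗[k] H) := fAlg.toRingHom with hf
  have hftmul : ∀ (h : H) (r : F), f (h ⊗ₜ[k] r) = (algebraMap F L r) ⊗ₜ[k] h := by
    intro h r
    show (Algebra.TensorProduct.comm k H L)
      ((Algebra.TensorProduct.map (AlgHom.id k H) ιF) (h ⊗ₜ[k] r)) = _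
    rw [Algebra.TensorProduct.map_tmul, Algebra.TensorProduct.comm_tmul]
    rfl
  -- injectivity of f
  have hfinj : Function.Injective f := by
    have hmapeq : ⇑(Algebra.TensorProduct.map (AlgHom.id k H) ιF)
        = ⇑(LinearMap.lTensor H ιF.toLinearMap) := by
      have h1 : (Algebra.TensorProduct.map (AlgHom.id k H) ιF).toLinearMap
          = LinearMap.lTensor H ιF.toLinearMap :=
        TensorProduct.ext' (fun h r => by simp [Algebra.TensorProduct.map_tmul])
      exact congrArg (fun (φ : _ →ₗ[k] _) => ⇑φ) h1
    have hinj1 : Function.Injective (Algebra.TensorProduct.map (AlgHom.id k H) ιF) := by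
      rw [hmapeq]
      exact Module.Flat.lTensor_preserves_injective_linearMap ιF.toLinearMap
        ((algebraMap F L).injective)
    exact (Algebra.TensorProduct.comm k H L).injective.comp hinj1
  -- the morphism from the Galois group
  have hΦtmul : ∀ (σ : L ≃ₐ[F] L) (c : L) (h : H),
      (Algebra.TensorProduct.congr (σ.restrictScalars k)
        (AlgEquiv.refl (R := k) (A₁ := H))).toRingEquiv (c ⊗ₜ[k] h) = (σ c) ⊗ₜ[k] h := by
    intro σ c h
    simp [Algebra.TensorProduct.congr_apply, Algebra.TensorProduct.map_tmul]
  set Φfun : (L ≃ₐ[F] L) → RingAut (L ⊗[k] H) := fun σ =>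
    (Algebra.TensorProduct.congr (σ.restrictScalars k)
      (AlgEquiv.refl (R := k) (A₁ := H))).toRingEquiv with hΦfun
  have hΦtmul' : ∀ (σ : L ≃ₐ[F] L) (c : L) (h : H),
      Φfun σ (c ⊗ₜ[k] h) = (σ c) ⊗ₜ[k] h := fun σ c h => hΦtmul σ c h
  have hext : ∀ g₁ g₂ : RingAut (L ⊗[k] H),
      (∀ (c : L) (h : H), g₁ (c ⊗ₜ[k] h) = g₂ (c ⊗ₜ[k] h)) → g₁ = g₂ := by
    intro g₁ g₂ hch
    apply RingEquiv.ext
    intro x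
    induction x using TensorProduct.induction_on with
    | zero => rw [map_zero, map_zero]
    | tmul c h => exact hch c h
    | add u v hu hv => rw [map_add, map_add, hu, hv]
  have hΦmul : ∀ σ τ, Φfun (σ * τ) = Φfun σ * Φfun τ := by
    intro σ τ
    apply hext
    intro c h
    show Φfun (σ * τ) (c ⊗ₜ[k] h) = Φfun σ (Φfun τ (c ⊗ₜ[k] h))
    rw [hΦtmul', hΦtmul', hΦtmul']
    rfl
  set Φmon : (L ≃ₐ[F] L) →* RingAut (L ⊗[k] H) := MonoidHom.mk' Φfun hΦmul with hΦmon
  have hΦmem : ∀ σ, Φfun σ ∈ ringFixingGroup f := by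
    intro σ a
    induction a using TensorProduct.induction_on with
    | zero => rw [map_zero, map_zero]
    | tmul h r => rw [hftmul, hΦtmul', σ.commutes]
    | add u v hu hv => rw [map_add f, map_add, hu, hv]
  set Φ' : (L ≃ₐ[F] L) →* ringFixingGroup f := Φmon.codRestrict _ hΦmem with hΦ'
  have hι1 : ∀ c c' : L, c ⊗ₜ[k] (1:H) = c' ⊗ₜ[k] (1:H) → c = c' :=
    fun c c' h => tmul_one_injective h
  -- injectivity of Φ'
  have hΦ'inj : Function.Injective Φ' := by
    intro σ τ h
    have h2 : Φfun σ = Φfun τ := congrArg Subtype.val h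
    apply AlgEquiv.ext
    intro c
    have h3 := congrArg (fun (γ : RingAut (L ⊗[k] H)) => γ (c ⊗ₜ[k] (1:H))) h2
    rw [hΦtmul', hΦtmul'] at h3
    exact hι1 _ _ h3
  -- surjectivity of Φ'
  have hΦ'surj : Function.Surjective Φ' := by
    rintro ⟨g, hg⟩
    have hgH : ∀ h : H, g ((1:L) ⊗ₜ[k] h) = (1:L) ⊗ₜ[k] h := by
      intro h
      have h1 := hg (h ⊗ₜ[k] (1:F))
      rwa [hftmul, map_one] at h1
    have hgfix : ∀ c : L, ∃ c', g (c ⊗ₜ[k] (1:H)) = c' ⊗ₜ[k] (1:H) := by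
      intro c
      apply exists_tmul_one_of_commutes hcenter
      intro h
      rw [← hgH h, ← map_mul, ← map_mul]
      congr 1
      rw [Algebra.TensorProduct.tmul_mul_tmul, Algebra.TensorProduct.tmul_mul_tmul,
        one_mul, mul_one, one_mul, mul_one]
    choose θ hθ using hgfix
    have hginv : ∀ a, g.symm (f a) = f a := by
      have := (ringFixingGroup f).inv_mem hg
      exact this
    have hgfix' : ∀ c : L, ∃ c', g.symm (c ⊗ₜ[k] (1:H)) = c' ⊗ₜ[k] (1:H) := by
      intro c
      apply exists_tmul_one_of_commutes hcenter
      intro h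
      have hgH' : g.symm ((1:L) ⊗ₜ[k] h) = (1:L) ⊗ₜ[k] h := by
        have h1 := hginv (h ⊗ₜ[k] (1:F))
        rwa [hftmul, map_one] at h1
      rw [← hgH', ← map_mul, ← map_mul]
      congr 1
      rw [Algebra.TensorProduct.tmul_mul_tmul, Algebra.TensorProduct.tmul_mul_tmul,
        one_mul, mul_one, one_mul, mul_one]
    choose θ' hθ' using hgfix'
    have hlr : ∀ c, θ' (θ c) = c := by
      intro c
      apply hι1
      rw [← hθ', ← hθ, RingEquiv.symm_apply_apply]
    have hrl : ∀ c, θ (θ' c) = c := by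
      intro c
      apply hι1
      rw [← hθ, ← hθ', RingEquiv.apply_symm_apply]
    have hθadd : ∀ c c', θ (c + c') = θ c + θ c' := by
      intro c c'
      apply hι1
      rw [← hθ, TensorProduct.add_tmul, map_add, hθ, hθ, ← TensorProduct.add_tmul]
    have hθmul : ∀ c c', θ (c * c') = θ c * θ c' := by
      intro c c'
      apply hι1
      have h1 : (c * c') ⊗ₜ[k] (1:H) = (c ⊗ₜ[k] (1:H)) * (c' ⊗ₜ[k] (1:H)) := by
        rw [Algebra.TensorProduct.tmul_mul_tmul, one_mul]
      rw [← hθ, h1, map_mul, hθ, hθ, Algebra.TensorProduct.tmul_mul_tmul, one_mul]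
    set σ₀ : L ≃+* L :=
      { toFun := θ, invFun := θ', left_inv := hlr, right_inv := hrl,
        map_mul' := hθmul, map_add' := hθadd } with hσ₀
    have hcommutes : ∀ r : F, σ₀ (algebraMap F L r) = algebraMap F L r := by
      intro r
      apply hι1
      show θ (algebraMap F L r) ⊗ₜ[k] (1:H) = _
      rw [← hθ]
      have h1 := hg ((1:H) ⊗ₜ[k] r)
      rw [hftmul] at h1
      exact h1
    refine ⟨AlgEquiv.ofRingEquiv (f := σ₀) hcommutes, ?_⟩
    apply Subtype.ext
    show Φfun (AlgEquiv.ofRingEquiv (f := σ₀) hcommutes) = g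
    apply hext
    intro c h
    rw [hΦtmul']
    have hstep : g (c ⊗ₜ[k] h) = θ c ⊗ₜ[k] h := by
      have h1 : (c ⊗ₜ[k] h) = (c ⊗ₜ[k] (1:H)) * ((1:L) ⊗ₜ[k] h) := by
        rw [Algebra.TensorProduct.tmul_mul_tmul, mul_one, one_mul]
      rw [h1, map_mul, hθ, hgH, Algebra.TensorProduct.tmul_mul_tmul, mul_one, one_mul]
    rw [hstep]
    rfl
  -- fixed points
  have hfixed : ∀ x : L ⊗[k] H, (∀ g ∈ ringFixingGroup f, g x = x) → x ∈ Set.range f := by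
    intro x hx
    set bH : Module.Basis (Fin (Module.finrank k H)) k H := Module.finBasis k H with hbH
    set wb : Module.Basis (Fin (Module.finrank k H)) L (L ⊗[k] H) := bH.baseChange L with hwb
    set cfun : Fin (Module.finrank k H) → L := fun i => wb.repr x i with hcfun
    have hsmul : ∀ (c : L) (i), c • wb i = c ⊗ₜ[k] bH i := by
      intro c i
      rw [hwb, Module.Basis.baseChange_apply, TensorProduct.smul_tmul', smul_eq_mul, mul_one]
    have hxsum : x = ∑ i, cfun i • wb i := (wb.sum_repr x).symm
    have hfixc : ∀ (σ : L ≃ₐ[F] L) (j : Fin (Module.finrank k H)), σ (cfun j) = cfun j := by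
      intro σ j
      have h1 : Φfun σ x = x := hx (Φfun σ) (hΦmem σ)
      have h2 : Φfun σ x = ∑ i, σ (cfun i) • wb i := by
        conv_lhs => rw [hxsum]
        rw [map_sum]
        refine Finset.sum_congr rfl fun i _ => ?_
        rw [hsmul, hΦtmul', ← hsmul]
      have h3 : ∑ i, σ (cfun i) • wb i = ∑ i, cfun i • wb i := by
        rw [← h2, h1, hxsum]
      have h6 : ⇑(wb.repr (∑ i, σ (cfun i) • wb i)) = ⇑(wb.repr (∑ i, cfun i • wb i)) := by
        rw [h3]
      rw [Module.Basis.repr_sum_self, Module.Basis.repr_sum_self] at h6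
      exact congrFun h6 j
    have hGal : IntermediateField.fixedField (⊤ : Subgroup (L ≃ₐ[F] L)) = ⊥ := by
      have hg := (IsGalois.tfae (F := F) (E := L)).out 0 1
      exact hg.mp inferInstance
    have hmem : ∀ j, cfun j ∈ (⊥ : IntermediateField F L) := by
      intro j
      rw [← hGal]
      exact fun g => hfixc g.1 j
    have hrange : ∀ j, ∃ r : F, algebraMap F L r = cfun j := fun j =>
      IntermediateField.mem_bot.mp (hmem j)
    choose r hr using hrange
    refine ⟨∑ i, bH i ⊗ₜ[k] (r i), ?_⟩
    rw [map_sum, hxsum]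
    refine Finset.sum_congr rfl fun i _ => ?_
    rw [hftmul, hr, hsmul]
  exact ⟨f, hfinj, ⟨MulEquiv.ofBijective Φ' ⟨hΦ'inj, hΦ'surj⟩⟩, hfixed⟩

end Aux

/-- **Main theorem.** Let `k` be a commutative field and `H` a division ring of finite
dimension over its center `k`. If `PIGCP k` has a positive answer, then every finite group
is the Galois group (in Artin's sense) of a Galois extension of the skew field
`H(t) ≅ H ⊗[k] k(t)` of rational fractions with central indeterminate. -/
theorem main_theorem
    (k : Type) [Field k]
    (H : Type) [DivisionRing H] [Algebra k H] [FiniteDimensional k H]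
    (hcenter : Subalgebra.center k H = ⊥)
    (hPIGCP : PIGCP k)
    (G : Type) [Group G] [Finite G] :
    ∃ (Ω : Type) (dΩ : DivisionRing Ω), letI := dΩ;
      ∃ f : (H ⊗[k] RatFunc k) →+* Ω,
        Function.Injective f ∧
        Nonempty (G ≃* ringFixingGroup f) ∧
        ∀ x : Ω, (∀ g ∈ ringFixingGroup f, g x = x) → x ∈ Set.range f := by
  classical
  set m := Module.finrank k H with hm
  set b : Module.Basis (Fin m) k H := Module.finBasis k H with hb
  obtain ⟨L, fL, aL, aRL, hbody⟩ :=
    hPIGCP m m (normPoly b) (normPoly_isHomogeneous b) (normPoly_trivial_zero_on_k b) G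
  letI := fL
  letI := aL
  letI := aRL
  obtain ⟨htower, hfd, hgal, ⟨eG⟩, htriv⟩ := hbody
  letI := htower
  letI := hfd
  letI := hgal
  -- `L ⊗[k] H` is a division ring
  have hdiv : ∀ x : L ⊗[k] H, x ≠ 0 → IsUnit x := by
    intro x hxne
    rw [isUnit_iff_det_ne_zero b x]
    set wb : Module.Basis (Fin m) L (L ⊗[k] H) := b.baseChange L with hwb
    set z : Fin m → L := fun i => wb.repr x i with hz
    have hxz : x = ∑ l, z l • wb l := (wb.sum_repr x).symm
    intro hdet0
    have haev : MvPolynomial.aeval z (normPoly b) = 0 := by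
      rw [aeval_normPoly b L z, ← hwb, ← hxz, hdet0]
    have hz0 : z = 0 := htriv z haev
    apply hxne
    rw [hxz, hz0]
    simp
  have hmpos : 0 < m := Module.finrank_pos
  have hnontriv : Nontrivial (L ⊗[k] H) :=
    nontrivial_of_ne ((b.baseChange L) ⟨0, hmpos⟩) 0 ((b.baseChange L).ne_zero _)
  letI dΩ : DivisionRing (L ⊗[k] H) :=
    DivisionRing.ofIsUnitOrEqZero (fun a => or_iff_not_imp_right.mpr (hdiv a))
  obtain ⟨f, hfinj, ⟨eGal⟩, hfix⟩ := aux_main k (RatFunc k) L H hcenter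
  exact ⟨L ⊗[k] H, dΩ, f, hfinj, ⟨eG.trans eGal⟩, hfix⟩
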